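/- Let A be an n×n real matrix that is conditionally negative definite (yᵀAy < 0 for all nonzero y with coordinates summing to 0). If p and q are both Nash equilibria of the symmetric game with payoff matrix A (i.e., pᵀAp ≥ qᵀAp and qᵀAq ≥ pᵀAq with p, q in the probability simplex), then p = q. -/
import Mathlib


open Matrix

theorem stmt_6 {n : ℕ} (A : Matrix (Fin n) (Fin n) ℝ)
    (hA : ∀ y : Fin n → ℝ, y ≠ 0 → ∑ j, y j = 0 → y ⬝ᵥ A.mulVec y < 0)
    (p q : Fin n → ℝ)
    (hp0 : ∀ j, 0 ≤ p j) (hp1 : ∑ j, p j = 1)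
    (hq0 : ∀ j, 0 ≤ q j) (hq1 : ∑ j, q j = 1)
    (hpNash : ∀ r : Fin n → ℝ, (∀ j, 0 ≤ r j) → ∑ j, r j = 1 →
      r ⬝ᵥ A.mulVec p ≤ p ⬝ᵥ A.mulVec p)
    (hqNash : ∀ r : Fin n → ℝ, (∀ j, 0 ≤ r j) → ∑ j, r j = 1 →
      r ⬝ᵥ A.mulVec q ≤ q ⬝ᵥ A.mulVec q) :
    p = q := by
  by_contra hne
  have hy : p - q ≠ 0 := sub_ne_zero_of_ne hne
  have hsum : ∑ j, (p - q) j = 0 := by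
    simp [Finset.sum_sub_distrib, hp1, hq1]
  have hneg := hA (p - q) hy hsum
  have h1 := hpNash q hq0 hq1
  have h2 := hqNash p hp0 hp1
  have hexp : (p - q) ⬝ᵥ A.mulVec (p - q)
      = (p ⬝ᵥ A.mulVec p - q ⬝ᵥ A.mulVec p) - (p ⬝ᵥ A.mulVec q - q ⬝ᵥ A.mulVec q) := by
    rw [Matrix.mulVec_sub, dotProduct_sub, sub_dotProduct, sub_dotProduct]

  rw [hexp] at hneg
  linarith
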